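/- (Average case estimate) In dimension d ≥ 1, for any real coefficients α(R) we have 2^{-n} Σ_{|R| = 2^{-n}} |α(R)| ≤ C n^{(d-1)/2} ‖Σ_{|R| = 2^{-n}} α(R) h_R‖_{L^∞([0,1]^d)}, with constant C depending only on d. -/

import Mathlib

open MeasureTheory Finset

noncomputable def haarN (k j : ℕ) (x : ℝ) : ℝ :=
  if x ∈ Set.Ico ((j : ℝ) / 2 ^ k) ((2 * j + 1 : ℝ) / 2 ^ (k + 1)) then -1
  else if x ∈ Set.Ico ((2 * j + 1 : ℝ) / 2 ^ (k + 1)) ((j + 1 : ℝ) / 2 ^ k) then 1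
  else 0

-- endpoint identities
lemma ep1 (k j : ℕ) : ((j : ℝ) / 2 ^ k) = (2 * j : ℝ) / 2 ^ (k+1) := by
  rw [pow_succ]; ring

lemma ep2 (k j : ℕ) : (((j : ℝ) + 1) / 2 ^ k) = (2 * j + 2 : ℝ) / 2 ^ (k+1) := by
  rw [pow_succ]; ring

lemma haarN_eq (k j : ℕ) (x : ℝ) :
    haarN k j x = (Set.Ico ((2 * j + 1 : ℝ) / 2 ^ (k + 1)) ((j + 1 : ℝ) / 2 ^ k)).indicator
        (fun _ => (1:ℝ)) x
      - (Set.Ico ((j : ℝ) / 2 ^ k) ((2 * j + 1 : ℝ) / 2 ^ (k + 1))).indicator (fun _ => (1:ℝ)) x := by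
  unfold haarN
  by_cases h1 : x ∈ Set.Ico ((j : ℝ) / 2 ^ k) ((2 * j + 1 : ℝ) / 2 ^ (k + 1)) <;>
    by_cases h2 : x ∈ Set.Ico ((2 * j + 1 : ℝ) / 2 ^ (k + 1)) ((j + 1 : ℝ) / 2 ^ k) <;>
    simp [h1, h2]
  exact absurd (h1.2.trans_le h2.1) (lt_irrefl x)

lemma haarN_sq (k j : ℕ) (x : ℝ) :
    haarN k j x ^ 2 = (Set.Ico ((2 * j + 1 : ℝ) / 2 ^ (k + 1)) ((j + 1 : ℝ) / 2 ^ k)).indicator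
        (fun _ => (1:ℝ)) x
      + (Set.Ico ((j : ℝ) / 2 ^ k) ((2 * j + 1 : ℝ) / 2 ^ (k + 1))).indicator (fun _ => (1:ℝ)) x := by
  unfold haarN
  by_cases h1 : x ∈ Set.Ico ((j : ℝ) / 2 ^ k) ((2 * j + 1 : ℝ) / 2 ^ (k + 1)) <;>
    by_cases h2 : x ∈ Set.Ico ((2 * j + 1 : ℝ) / 2 ^ (k + 1)) ((j + 1 : ℝ) / 2 ^ k) <;>
    simp [h1, h2]
  exact absurd (h1.2.trans_le h2.1) (lt_irrefl x)

lemma haarN_support {k j : ℕ} {x : ℝ} (h : haarN k j x ≠ 0) :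
    x ∈ Set.Ico ((j : ℝ) / 2 ^ k) ((j + 1 : ℝ) / 2 ^ k) := by
  have h2k : (0:ℝ) < 2 ^ (k+1) := by positivity
  unfold haarN at h
  split_ifs at h with h1 h2
  · refine ⟨h1.1, h1.2.trans_le ?_⟩
    rw [ep2]; gcongr <;> norm_num
  · refine ⟨le_trans ?_ h2.1, h2.2⟩
    rw [ep1]; gcongr; norm_num
  · exact absurd rfl h

lemma haarN_abs_le_one (k j : ℕ) (x : ℝ) : |haarN k j x| ≤ 1 := by
  unfold haarN; split_ifs <;> norm_num

lemma measurable_haarN (k j : ℕ) : Measurable (haarN k j) := by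
  have : haarN k j = fun x =>
      (Set.Ico ((2 * j + 1 : ℝ) / 2 ^ (k + 1)) ((j + 1 : ℝ) / 2 ^ k)).indicator (fun _ => (1:ℝ)) x
      - (Set.Ico ((j : ℝ) / 2 ^ k) ((2 * j + 1 : ℝ) / 2 ^ (k + 1))).indicator (fun _ => (1:ℝ)) x :=
    funext (haarN_eq k j)
  rw [this]
  exact ((measurable_const.indicator measurableSet_Ico).sub
    (measurable_const.indicator measurableSet_Ico))

lemma integrable_indicator_Ico (a b : ℝ) :
    Integrable ((Set.Ico a b).indicator (fun _ => (1:ℝ))) := by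
  rw [integrable_indicator_iff measurableSet_Ico]
  exact integrableOn_const (by rw [Real.volume_Ico]; exact ENNReal.ofReal_ne_top)

lemma integrable_haarN (k j : ℕ) : Integrable (haarN k j) := by
  have : haarN k j = fun x =>
      (Set.Ico ((2 * j + 1 : ℝ) / 2 ^ (k + 1)) ((j + 1 : ℝ) / 2 ^ k)).indicator (fun _ => (1:ℝ)) x
      - (Set.Ico ((j : ℝ) / 2 ^ k) ((2 * j + 1 : ℝ) / 2 ^ (k + 1))).indicator (fun _ => (1:ℝ)) x :=
    funext (haarN_eq k j)
  rw [this]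
  exact (integrable_indicator_Ico _ _).sub (integrable_indicator_Ico _ _)

lemma len1 (k j : ℕ) : (2 * (j:ℝ) + 1) / 2 ^ (k + 1) - (j : ℝ) / 2 ^ k = 1 / 2 ^ (k+1) := by
  rw [pow_succ]; have : (2:ℝ)^k ≠ 0 := by positivity
  field_simp; ring

lemma len2 (k j : ℕ) : ((j:ℝ) + 1) / 2 ^ k - (2 * (j:ℝ) + 1) / 2 ^ (k + 1) = 1 / 2 ^ (k+1) := by
  rw [pow_succ]; have : (2:ℝ)^k ≠ 0 := by positivity
  field_simp; ring

lemma integral_indicator_Ico (a b : ℝ) (h : a ≤ b) :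
    ∫ x, (Set.Ico a b).indicator (fun _ => (1:ℝ)) x = b - a := by
  rw [integral_indicator measurableSet_Ico]
  simp [Real.volume_Ico, ENNReal.toReal_ofReal (sub_nonneg.2 h)]
  linarith

lemma integral_haarN (k j : ℕ) : ∫ x, haarN k j x = 0 := by
  have hle1 : (j : ℝ) / 2 ^ k ≤ (2 * j + 1 : ℝ) / 2 ^ (k + 1) := by
    rw [ep1]; gcongr; norm_num
  have hle2 : (2 * j + 1 : ℝ) / 2 ^ (k + 1) ≤ ((j:ℝ) + 1) / 2 ^ k := by
    rw [ep2]; gcongr <;> norm_num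
  simp only [funext (haarN_eq k j)]
  rw [integral_sub (integrable_indicator_Ico _ _) (integrable_indicator_Ico _ _),
    integral_indicator_Ico _ _ hle2, integral_indicator_Ico _ _ hle1, len1, len2]
  ring

lemma integral_haarN_sq (k j : ℕ) : ∫ x, haarN k j x ^ 2 = 1 / 2 ^ k := by
  have hle1 : (j : ℝ) / 2 ^ k ≤ (2 * j + 1 : ℝ) / 2 ^ (k + 1) := by
    rw [ep1]; gcongr; norm_num
  have hle2 : (2 * j + 1 : ℝ) / 2 ^ (k + 1) ≤ ((j:ℝ) + 1) / 2 ^ k := by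
    rw [ep2]; gcongr <;> norm_num
  simp only [funext (haarN_sq k j)]
  rw [integral_add (integrable_indicator_Ico _ _) (integrable_indicator_Ico _ _),
    integral_indicator_Ico _ _ hle2, integral_indicator_Ico _ _ hle1, len1, len2, pow_succ]
  have : (2:ℝ)^k ≠ 0 := by positivity
  field_simp; ring

lemma mem_iff_floor (k : ℕ) (x : ℝ) (a : ℕ) :
    ((a:ℝ)/2^(k+1) ≤ x ∧ x < ((a:ℝ)+1)/2^(k+1)) ↔ ⌊2^(k+1)*x⌋ = (a:ℤ) := by
  have h2 : (0:ℝ) < 2^(k+1) := by positivity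
  constructor
  · rintro ⟨h1, h2'⟩
    have A : (a:ℝ) ≤ 2^(k+1)*x := by rw [div_le_iff₀ h2] at h1; linarith
    have B : 2^(k+1)*x < (a:ℝ)+1 := by rw [lt_div_iff₀ h2] at h2'; linarith
    rw [Int.floor_eq_iff]
    refine ⟨by exact_mod_cast A, by push_cast; linarith⟩
  · intro h
    rw [Int.floor_eq_iff] at h
    obtain ⟨A, B⟩ := h
    push_cast at A B
    exact ⟨by rw [div_le_iff₀ h2]; linarith, by rw [lt_div_iff₀ h2]; linarith⟩

lemma haarN_floor (k j : ℕ) (x : ℝ) :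
    haarN k j x = if ⌊2 ^ (k+1) * x⌋ = (2 * j : ℤ) then -1
      else if ⌊2 ^ (k+1) * x⌋ = (2 * j + 1 : ℤ) then 1 else 0 := by
  have m1 : x ∈ Set.Ico ((j : ℝ) / 2 ^ k) ((2 * j + 1 : ℝ) / 2 ^ (k + 1)) ↔
      ⌊2 ^ (k+1) * x⌋ = (2 * j : ℤ) := by
    rw [Set.mem_Ico, ep1]
    have := mem_iff_floor k x (2*j)
    push_cast at this ⊢
    exact this
  have m2 : x ∈ Set.Ico ((2 * j + 1 : ℝ) / 2 ^ (k + 1)) ((j + 1 : ℝ) / 2 ^ k) ↔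
      ⌊2 ^ (k+1) * x⌋ = (2 * j + 1 : ℤ) := by
    rw [Set.mem_Ico, ep2]
    have := mem_iff_floor k x (2*j+1)
    push_cast at this ⊢
    rw [show (2*(j:ℝ)+1+1) = 2*(j:ℝ)+2 by ring] at this
    exact this
  unfold haarN
  simp only [m1, m2]

lemma floor_of_mem_dyad (t a : ℕ) {z : ℝ} (hz : z ∈ Set.Ico ((a:ℝ)/2^t) (((a:ℝ)+1)/2^t)) :
    ⌊z⌋ = (a / 2^t : ℕ) := by
  have h2t : (0:ℝ) < 2^t := by positivity
  have hq : a + 1 ≤ (a / 2^t) * 2^t + 2^t := by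
    have h1 := Nat.div_add_mod' a (2^t)
    have h2 := Nat.mod_lt a (show 0 < 2^t by positivity)
    set b := 2^t
    set q := a / b
    set m := a % b
    omega
  rw [Int.floor_eq_iff]
  refine ⟨le_trans ?_ hz.1, hz.2.trans_le ?_⟩
  · rw [Int.cast_natCast, le_div_iff₀ h2t]
    exact_mod_cast Nat.div_mul_le_self a (2^t)
  · rw [Int.cast_natCast, div_le_iff₀ h2t]
    calc (a:ℝ) + 1 ≤ ((a / 2^t : ℕ) : ℝ) * 2^t + 2^t := by exact_mod_cast hq
    _ = (((a / 2^t : ℕ):ℝ) + 1) * 2^t := by ring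

lemma haarN_const_on {k k' : ℕ} (hkk : k + 1 ≤ k') (j a : ℕ) {x y : ℝ}
    (hx : x ∈ Set.Ico ((a:ℝ)/2^k') (((a:ℝ)+1)/2^k'))
    (hy : y ∈ Set.Ico ((a:ℝ)/2^k') (((a:ℝ)+1)/2^k')) :
    haarN k j x = haarN k j y := by
  rw [haarN_floor, haarN_floor]
  suffices h : ⌊2^(k+1)*x⌋ = ⌊2^(k+1)*y⌋ by rw [h]
  obtain ⟨t, rfl⟩ : ∃ t, k' = (k+1)+t := ⟨k'-(k+1), by omega⟩
  have hp : (0:ℝ) < 2^(k+1) := by positivity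
  have e : ∀ b : ℝ, 2^(k+1) * (b / 2^((k+1)+t)) = b / 2^t := by
    intro b
    rw [pow_add]
    have h1 : (2:ℝ)^(k+1) ≠ 0 := by positivity
    have h2 : (2:ℝ)^t ≠ 0 := by positivity
    field_simp
    rw [pow_add, pow_succ]
    ring
  have scale : ∀ z : ℝ, z ∈ Set.Ico ((a:ℝ)/2^((k+1)+t)) (((a:ℝ)+1)/2^((k+1)+t)) →
      2^(k+1)*z ∈ Set.Ico ((a:ℝ)/2^t) (((a:ℝ)+1)/2^t) := by
    rintro z ⟨h1, h2⟩
    constructor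
    · rw [← e]
      exact mul_le_mul_of_nonneg_left h1 hp.le
    · rw [← e ((a:ℝ)+1)]
      exact mul_lt_mul_of_pos_left h2 hp
  rw [floor_of_mem_dyad t a (scale x hx), floor_of_mem_dyad t a (scale y hy)]

lemma div_lt_div_same {a b c : ℝ} (hc : 0 < c) (h : a < b) : a / c < b / c := by
  rw [div_lt_div_iff₀ hc hc]; exact mul_lt_mul_of_pos_right h hc

lemma lt_of_div_lt_div {a b c : ℝ} (hc : 0 < c) (h : a / c < b / c) : a < b := by
  rw [div_lt_div_iff₀ hc hc] at h; exact lt_of_mul_lt_mul_right h hc.le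

lemma haarN_mul_disj {k j j' : ℕ} (h : j ≠ j') (x : ℝ) :
    haarN k j x * haarN k j' x = 0 := by
  have hp : (0:ℝ) < 2^k := by positivity
  by_cases hz : haarN k j x = 0
  · rw [hz, zero_mul]
  by_cases hz' : haarN k j' x = 0
  · rw [hz', mul_zero]
  exfalso
  have h1 := haarN_support hz
  have h2 := haarN_support hz'
  have A : (j:ℝ) < (j':ℝ) + 1 := lt_of_div_lt_div hp (h1.1.trans_lt h2.2)
  have B : (j':ℝ) < (j:ℝ) + 1 := lt_of_div_lt_div hp (h2.1.trans_lt h1.2)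
  have A' : j < j' + 1 := by exact_mod_cast A
  have B' : j' < j + 1 := by exact_mod_cast B
  omega

lemma integral_haarN_mul_of_lt {k k' j j' : ℕ} (h : k < k') :
    ∫ x, haarN k j x * haarN k' j' x = 0 := by
  have hp : (0:ℝ) < 2^k' := by positivity
  have hmem : ((j':ℝ)/2^k') ∈ Set.Ico ((j':ℝ)/2^k') (((j':ℝ)+1)/2^k') :=
    ⟨le_refl _, div_lt_div_same hp (by linarith)⟩
  set c := haarN k j ((j':ℝ)/2^k') with hc
  have hpt : ∀ x, haarN k j x * haarN k' j' x = c * haarN k' j' x := by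
    intro x
    by_cases hz : haarN k' j' x = 0
    · rw [hz, mul_zero, mul_zero]
    · rw [haarN_const_on (by omega) j j' (haarN_support hz) hmem]
  simp only [hpt]
  rw [integral_const_mul, integral_haarN, mul_zero]

lemma integral_haarN_mul (k j k' j' : ℕ) :
    ∫ x, haarN k j x * haarN k' j' x = if k = k' ∧ j = j' then 1/2^k else 0 := by
  rcases lt_trichotomy k k' with h|h|h
  · rw [if_neg (fun hh => absurd hh.1 h.ne), integral_haarN_mul_of_lt h]
  · subst h
    by_cases hj : j = j'
    · subst hj
      rw [if_pos ⟨rfl, rfl⟩, ← integral_haarN_sq k j]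
      congr 1; funext x; rw [sq]
    · rw [if_neg (fun hh => absurd hh.2 hj)]
      simp only [haarN_mul_disj hj, integral_zero]
  · rw [if_neg (fun hh => absurd hh.1 h.ne')]
    have e : (fun x => haarN k j x * haarN k' j' x) = fun x => haarN k' j' x * haarN k j x :=
      funext fun x => mul_comm _ _
    rw [e, integral_haarN_mul_of_lt h]

lemma integrable_haarN_mul (k j k' j' : ℕ) :
    Integrable (fun x => haarN k j x * haarN k' j' x) :=
  (integrable_haarN k' j').bdd_mul (c := 1) (measurable_haarN k j).aestronglyMeasurable
    (Filter.Eventually.of_forall fun x => by rw [Real.norm_eq_abs]; exact haarN_abs_le_one k j x)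
noncomputable def haarRect {d : ℕ} (r a : Fin d → ℕ) (x : Fin d → ℝ) : ℝ :=
  ∏ i, haarN (r i) (a i) (x i)

def unitCube (d : ℕ) : Set (Fin d → ℝ) := Set.univ.pi fun _ => Set.Ico (0 : ℝ) 1

def posFinset {d : ℕ} (r : Fin d → ℕ) : Finset (Fin d → ℕ) :=
  Fintype.piFinset fun i => Finset.range (2 ^ (r i))

def hypVecs (d n : ℕ) : Finset (Fin d → ℕ) :=
  (Fintype.piFinset fun _ : Fin d => Finset.range (n + 1)).filter fun r => ∑ i, r i = n

def dyadRect {d : ℕ} (r a : Fin d → ℕ) : Set (Fin d → ℝ) :=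
  Set.univ.pi fun i => Set.Ico ((a i : ℝ) / 2 ^ (r i)) (((a i : ℝ) + 1) / 2 ^ (r i))

lemma haarRect_mul_eq_prod {d : ℕ} (r a r' a' : Fin d → ℕ) (x : Fin d → ℝ) :
    haarRect r a x * haarRect r' a' x
      = ∏ i, (haarN (r i) (a i) (x i) * haarN (r' i) (a' i) (x i)) := by
  rw [haarRect, haarRect, ← Finset.prod_mul_distrib]

lemma haar_prod_integrable {d : ℕ} (r a r' a' : Fin d → ℕ) :
    Integrable (fun x : Fin d → ℝ => haarRect r a x * haarRect r' a' x) := by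
  simp only [haarRect_mul_eq_prod]
  exact Integrable.fintype_prod (f := fun i t => haarN (r i) (a i) t * haarN (r' i) (a' i) t)
    (fun i => integrable_haarN_mul _ _ _ _)

lemma integral_haarRect_mul {d : ℕ} (r a r' a' : Fin d → ℕ) :
    ∫ x : Fin d → ℝ, haarRect r a x * haarRect r' a' x
      = if r = r' ∧ a = a' then 1 / 2 ^ (∑ i, r i) else 0 := by
  simp only [haarRect_mul_eq_prod]
  rw [volume_pi, MeasureTheory.integral_fintype_prod_eq_prod
    (fun i t => haarN (r i) (a i) t * haarN (r' i) (a' i) t)]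
  by_cases h : r = r' ∧ a = a'
  · obtain ⟨rfl, rfl⟩ := h
    rw [if_pos ⟨rfl, rfl⟩]
    simp only [integral_haarN_mul, and_self, if_true, one_div]
    rw [← Finset.prod_pow_eq_pow_sum, ← Finset.prod_inv_distrib]
  · rw [if_neg h]
    have hex : ∃ i, r i ≠ r' i ∨ a i ≠ a' i := by
      by_contra hc
      push_neg at hc
      exact h ⟨funext fun i => (hc i).1, funext fun i => (hc i).2⟩
    obtain ⟨i, hi⟩ := hex
    refine Finset.prod_eq_zero (Finset.mem_univ i) ?_
    rw [integral_haarN_mul, if_neg (by tauto)]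

lemma haarRect_zero_off {d : ℕ} {r a : Fin d → ℕ} (ha : a ∈ posFinset r) {x : Fin d → ℝ}
    (hx : x ∉ unitCube d) : haarRect r a x = 0 := by
  rw [unitCube, Set.mem_pi] at hx
  push_neg at hx
  obtain ⟨i, -, hi⟩ := hx
  refine Finset.prod_eq_zero (Finset.mem_univ i) ?_
  by_contra hz
  have hsupp := haarN_support hz
  have hai : a i + 1 ≤ 2 ^ (r i) := by
    rw [posFinset, Fintype.mem_piFinset] at ha
    exact Finset.mem_range.mp (ha i)
  refine hi ⟨le_trans (by positivity) hsupp.1, hsupp.2.trans_le ?_⟩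
  rw [div_le_one (by positivity)]
  exact_mod_cast hai

lemma setIntegral_haarRect_mul {d : ℕ} (r a r' a' : Fin d → ℕ) (ha : a ∈ posFinset r) :
    ∫ x in unitCube d, haarRect r a x * haarRect r' a' x
      = if r = r' ∧ a = a' then 1 / 2 ^ (∑ i, r i) else 0 := by
  rw [setIntegral_eq_integral_of_forall_compl_eq_zero (fun x hx => by
    rw [haarRect_zero_off ha hx, zero_mul]), integral_haarRect_mul]

lemma volume_unitCube (d : ℕ) : volume (unitCube d) = 1 := by
  rw [unitCube, volume_pi_pi]
  simp [Real.volume_Ico]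
lemma sum_eq_of_mem_hypVecs {d n : ℕ} {r : Fin d → ℕ} (h : r ∈ hypVecs d n) :
    ∑ i, r i = n := (Finset.mem_filter.mp h).2

lemma card_posFinset {d : ℕ} (r : Fin d → ℕ) :
    (posFinset r).card = 2 ^ (∑ i, r i) := by
  rw [posFinset, Fintype.card_piFinset]
  simp only [Finset.card_range]
  exact Finset.prod_pow_eq_pow_sum _ _ _

lemma card_hypVecs_le (d' n : ℕ) : (hypVecs (d'+1) n).card ≤ (n+1) ^ d' := by
  have h := Finset.card_le_card_of_injOn
    (s := hypVecs (d'+1) n)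
    (f := fun (r : Fin (d'+1) → ℕ) (i : Fin d') => r i.succ)
    (t := Fintype.piFinset fun _ : Fin d' => Finset.range (n+1)) ?_ ?_
  · calc (hypVecs (d'+1) n).card ≤ _ := h
    _ = (n+1) ^ d' := by
      rw [Fintype.card_piFinset]
      simp [Finset.prod_const]
  · intro r hr
    rw [Finset.mem_coe, hypVecs, Finset.mem_filter] at hr
    rw [Finset.mem_coe, Fintype.mem_piFinset]
    exact fun i => Fintype.mem_piFinset.mp hr.1 i.succ
  · intro r hr r' hr' hφ
    have hs : ∑ i, r i = n := sum_eq_of_mem_hypVecs hr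
    have hs' : ∑ i, r' i = n := sum_eq_of_mem_hypVecs hr'
    have htail : ∀ i : Fin d', r i.succ = r' i.succ := fun i => congrFun hφ i
    have h0 : r 0 = r' 0 := by
      rw [Fin.sum_univ_succ] at hs hs'
      have : ∑ i : Fin d', r i.succ = ∑ i : Fin d', r' i.succ :=
        Finset.sum_congr rfl fun i _ => htail i
      omega
    funext i
    refine Fin.cases h0 (fun j => htail j) i
lemma key_L2 {d n : ℕ} (α : (Fin d → ℕ) → (Fin d → ℕ) → ℝ) :
    ∫ x in unitCube d, (∑ p ∈ (hypVecs d n).sigma (fun r => posFinset r),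
        α p.1 p.2 * haarRect p.1 p.2 x) ^ 2
      = (∑ p ∈ (hypVecs d n).sigma (fun r => posFinset r), (α p.1 p.2) ^ 2) * (1 / 2 ^ n) := by
  set P := (hypVecs d n).sigma (fun r => posFinset r) with hP
  have hint : ∀ (p q : Σ _ : Fin d → ℕ, Fin d → ℕ),
      IntegrableOn (fun x => (α p.1 p.2 * α q.1 q.2) *
        (haarRect p.1 p.2 x * haarRect q.1 q.2 x)) (unitCube d) :=
    fun p q => ((haar_prod_integrable p.1 p.2 q.1 q.2).integrableOn).const_mul _
  have hsq : ∀ x : Fin d → ℝ, (∑ p ∈ P, α p.1 p.2 * haarRect p.1 p.2 x) ^ 2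
      = ∑ p ∈ P, ∑ q ∈ P, (α p.1 p.2 * α q.1 q.2) *
          (haarRect p.1 p.2 x * haarRect q.1 q.2 x) := by
    intro x
    rw [sq, Finset.sum_mul_sum]
    exact Finset.sum_congr rfl fun p _ => Finset.sum_congr rfl fun q _ =>
      mul_mul_mul_comm _ _ _ _
  calc ∫ x in unitCube d, (∑ p ∈ P, α p.1 p.2 * haarRect p.1 p.2 x) ^ 2
      = ∫ x in unitCube d, ∑ p ∈ P, ∑ q ∈ P, (α p.1 p.2 * α q.1 q.2) *
          (haarRect p.1 p.2 x * haarRect q.1 q.2 x) :=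
        integral_congr_ae (Filter.Eventually.of_forall hsq)
    _ = ∑ p ∈ P, ∫ x in unitCube d, ∑ q ∈ P, (α p.1 p.2 * α q.1 q.2) *
          (haarRect p.1 p.2 x * haarRect q.1 q.2 x) :=
        integral_finset_sum P fun p _ => integrable_finset_sum P fun q _ => hint p q
    _ = ∑ p ∈ P, ∑ q ∈ P, ∫ x in unitCube d, (α p.1 p.2 * α q.1 q.2) *
          (haarRect p.1 p.2 x * haarRect q.1 q.2 x) :=
        Finset.sum_congr rfl fun p _ => integral_finset_sum P fun q _ => hint p q
    _ = ∑ p ∈ P, (α p.1 p.2) ^ 2 * (1 / 2 ^ n) := by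
        refine Finset.sum_congr rfl fun p hp => ?_
        have hpmem := Finset.mem_sigma.mp hp
        rw [Finset.sum_eq_single p]
        · rw [integral_const_mul,
            setIntegral_haarRect_mul p.1 p.2 p.1 p.2 hpmem.2, if_pos ⟨rfl, rfl⟩,
            sum_eq_of_mem_hypVecs hpmem.1, sq]
        · intro q hq hqp
          have hqmem := Finset.mem_sigma.mp hq
          rw [integral_const_mul, setIntegral_haarRect_mul p.1 p.2 q.1 q.2 hpmem.2,
            if_neg (fun hh => hqp (Sigma.ext (α := Fin d → ℕ) (β := fun _ => Fin d → ℕ) hh.1 (heq_of_eq hh.2)).symm), mul_zero]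
        · intro hp'
          exact absurd hp hp'
    _ = (∑ p ∈ P, (α p.1 p.2) ^ 2) * (1 / 2 ^ n) := (Finset.sum_mul _ _ _).symm
theorem stmt_9 (d : ℕ) (hd : 1 ≤ d) :
    ∃ C : ℝ, 0 < C ∧ ∀ n : ℕ, 1 ≤ n → ∀ α : (Fin d → ℕ) → (Fin d → ℕ) → ℝ,
      ENNReal.ofReal
          ((2 : ℝ) ^ (-(n : ℤ)) * ∑ r ∈ hypVecs d n, ∑ a ∈ posFinset r, |α r a|) ≤
        ENNReal.ofReal (C * (n : ℝ) ^ (((d : ℝ) - 1) / 2)) *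
          eLpNorm
            (fun x => ∑ r ∈ hypVecs d n, ∑ a ∈ posFinset r, α r a * haarRect r a x) ⊤
            (volume.restrict (unitCube d)) := by
  refine ⟨(2:ℝ) ^ (((d:ℝ)-1)/2), Real.rpow_pos_of_pos two_pos _, ?_⟩
  intro n hn α
  set e := ((d:ℝ)-1)/2 with he
  set P := (hypVecs d n).sigma (fun r => posFinset r) with hP
  set H := fun x : Fin d → ℝ => ∑ r ∈ hypVecs d n, ∑ a ∈ posFinset r, α r a * haarRect r a x
    with hH
  set μ := volume.restrict (unitCube d) with hμ
  have hHsig : H = fun x => ∑ p ∈ P, α p.1 p.2 * haarRect p.1 p.2 x := by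
    funext x
    exact Finset.sum_sigma' _ _ _
  have hn0 : (0:ℝ) < n := by exact_mod_cast hn
  have hne : (0:ℝ) < (n:ℝ)^e := Real.rpow_pos_of_pos hn0 e
  have hCe : (0:ℝ) < (2:ℝ)^e := Real.rpow_pos_of_pos two_pos e
  rcases eq_top_or_lt_top (eLpNorm H ⊤ μ) with htop | hlt
  · rw [htop, ENNReal.mul_top (by
      simp only [ne_eq, ENNReal.ofReal_eq_zero, not_le]
      positivity)]
    exact le_top
  · set m := (eLpNorm H ⊤ μ).toReal with hm
    have hm0 : 0 ≤ m := ENNReal.toReal_nonneg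
    haveI : IsFiniteMeasure μ := by
      constructor
      rw [hμ, Measure.restrict_apply_univ, volume_unitCube]
      exact ENNReal.one_lt_top
    have hae : ∀ᵐ x ∂μ, (H x)^2 ≤ m^2 := by
      have h1 := ae_le_eLpNormEssSup (f := H) (μ := μ)
      filter_upwards [h1] with x hx
      have h2 : (‖H x‖₊ : ENNReal).toReal ≤ m := by
        apply ENNReal.toReal_mono hlt.ne
        rw [eLpNorm_exponent_top]
        exact hx
      have h3 : |H x| ≤ m := by simpa [Real.norm_eq_abs] using h2
      exact sq_le_sq' (neg_le_of_abs_le h3) (le_of_abs_le h3)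
    have hsq : ∀ x : Fin d → ℝ, (∑ p ∈ P, α p.1 p.2 * haarRect p.1 p.2 x) ^ 2
        = ∑ p ∈ P, ∑ q ∈ P, (α p.1 p.2 * α q.1 q.2) *
            (haarRect p.1 p.2 x * haarRect q.1 q.2 x) := by
      intro x
      rw [sq, Finset.sum_mul_sum]
      exact Finset.sum_congr rfl fun p _ => Finset.sum_congr rfl fun q _ =>
        mul_mul_mul_comm _ _ _ _
    have hintH2 : Integrable (fun x => (H x)^2) μ := by
      have hbig : Integrable (fun x : Fin d → ℝ => ∑ p ∈ P, ∑ q ∈ P,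
          (α p.1 p.2 * α q.1 q.2) * (haarRect p.1 p.2 x * haarRect q.1 q.2 x)) μ :=
        integrable_finset_sum P fun p _ => integrable_finset_sum P fun q _ =>
          ((haar_prod_integrable p.1 p.2 q.1 q.2).integrableOn).const_mul _
      refine hbig.congr (Filter.Eventually.of_forall fun x => ?_)
      rw [hHsig]
      exact (hsq x).symm
    set S := ∑ p ∈ P, (α p.1 p.2)^2 with hSdef
    have hS0 : 0 ≤ S := Finset.sum_nonneg fun p _ => sq_nonneg _
    have hpow : (0:ℝ) < 2^n := by positivity
    have hkey := key_L2 (d := d) (n := n) α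
    rw [← hP, ← hSdef] at hkey
    have hS : S * (1/2^n) ≤ m^2 := by
      rw [← hkey]
      have heq : ∫ x in unitCube d, (∑ p ∈ P, α p.1 p.2 * haarRect p.1 p.2 x)^2
          = ∫ x, (H x)^2 ∂μ := by rw [hHsig]
      rw [heq]
      calc ∫ x, (H x)^2 ∂μ ≤ ∫ _x, m^2 ∂μ := integral_mono_ae hintH2 (integrable_const _) hae
      _ = m^2 := by
        rw [integral_const, hμ, measureReal_restrict_apply_univ, Measure.real, volume_unitCube]
        simp
    have hS' : S ≤ 2^n * m^2 := by
      calc S = (S * (1/2^n)) * 2^n := by field_simp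
      _ ≤ m^2 * 2^n := mul_le_mul_of_nonneg_right hS hpow.le
      _ = 2^n * m^2 := mul_comm _ _
    set L := ∑ p ∈ P, |α p.1 p.2| with hLdef
    have hL0 : 0 ≤ L := Finset.sum_nonneg fun p _ => abs_nonneg _
    have hCS : L^2 ≤ (P.card : ℝ) * S := by
      have h := sq_sum_le_card_mul_sum_sq (s := P) (f := fun p => |α p.1 p.2|)
      simpa [sq_abs, ← hLdef, ← hSdef] using h
    set B := (2*(n:ℝ))^(d-1) with hB
    have hB0 : (0:ℝ) ≤ B := by positivity
    have hcard : (P.card : ℝ) ≤ B * 2^n := by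
      have h1 : P.card = (hypVecs d n).card * 2^n := by
        rw [hP, Finset.card_sigma]
        rw [Finset.sum_congr rfl fun r hr => by
          rw [card_posFinset, sum_eq_of_mem_hypVecs hr]]
        rw [Finset.sum_const, smul_eq_mul]
      have h2 : (hypVecs d n).card ≤ (2*n)^(d-1) := by
        obtain ⟨d', rfl⟩ : ∃ d', d = d'+1 := ⟨d-1, by omega⟩
        calc (hypVecs (d'+1) n).card ≤ (n+1)^d' := card_hypVecs_le d' n
        _ ≤ (2*n)^d' := Nat.pow_le_pow_left (by omega) d'
        _ = (2*n)^(d'+1-1) := by norm_num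
      rw [h1, hB]
      have h3 : ((hypVecs d n).card : ℝ) ≤ ((2*n)^(d-1) : ℕ) := by exact_mod_cast h2
      push_cast at h3 ⊢
      exact mul_le_mul_of_nonneg_right h3 (by positivity)
    have hL2 : L^2 ≤ (Real.sqrt B * (2^n * m))^2 := by
      rw [mul_pow, Real.sq_sqrt hB0, mul_pow]
      calc L^2 ≤ (P.card:ℝ) * S := hCS
      _ ≤ (B * 2^n) * (2^n * m^2) := mul_le_mul hcard hS' hS0 (by positivity)
      _ = B * ((2^n)^2 * m^2) := by ring
    have hLle : L ≤ Real.sqrt B * (2^n * m) := by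
      have hrhs0 : 0 ≤ Real.sqrt B * (2^n*m) := by positivity
      calc L = Real.sqrt (L^2) := (Real.sqrt_sq hL0).symm
      _ ≤ Real.sqrt ((Real.sqrt B * (2^n*m))^2) := Real.sqrt_le_sqrt hL2
      _ = _ := Real.sqrt_sq hrhs0
    have hsb : Real.sqrt B = (2:ℝ)^e * (n:ℝ)^e := by
      have h2n0 : (0:ℝ) ≤ 2*(n:ℝ) := by positivity
      rw [hB, ← Real.rpow_natCast (2*(n:ℝ)) (d-1), Real.sqrt_eq_rpow, ← Real.rpow_mul h2n0]
      have hc : ((d-1 : ℕ):ℝ) * (1/2) = e := by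
        rw [Nat.cast_sub hd]
        push_cast
        rw [he]
        ring
      rw [hc, Real.mul_rpow (by norm_num) (Nat.cast_nonneg n)]
    have hsum : ∑ r ∈ hypVecs d n, ∑ a ∈ posFinset r, |α r a| = L := by
      rw [hLdef, hP]
      exact Finset.sum_sigma' _ _ _
    have hfinal : (2:ℝ)^(-(n:ℤ)) * L ≤ ((2:ℝ)^e * (n:ℝ)^e) * m := by
      have hzp : (2:ℝ)^(-(n:ℤ)) = 1/2^n := by
        rw [zpow_neg, zpow_natCast, one_div]
      rw [hzp]
      calc 1/2^n * L ≤ 1/2^n * (Real.sqrt B * (2^n * m)) :=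
        mul_le_mul_of_nonneg_left hLle (by positivity)
      _ = Real.sqrt B * m := by field_simp
      _ = ((2:ℝ)^e * (n:ℝ)^e) * m := by rw [hsb]
    rw [← ENNReal.ofReal_toReal hlt.ne, ← hm,
      ← ENNReal.ofReal_mul (by positivity : (0:ℝ) ≤ (2:ℝ)^e * (n:ℝ)^e)]
    apply ENNReal.ofReal_le_ofReal
    rw [hsum]
    exact hfinal
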